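/- Let n ≥ 1 be odd, k ≥ 1 an integer, and p, q be the continuous 2π-periodic functions p(φ) = (sin^{2n-1}φ cosφ − cos^{2n-1}φ sinφ)/(sin^{2n}φ + cos^{2n}φ) and q(φ) = −sin^{n-1}φ cos^{n-1}φ (sin^{2n}φ + cos^{2n}φ)^{k-1}. Then for any constant C, the function r(φ) = (sin^{2n}φ + cos^{2n}φ)^{−1/(2n)} · (I(φ) + C)^{−1/(2nk)}, where I(φ) = 2nk∫₀^φ sin^{n-1}τ cos^{n-1}τ/(sin^{2n}τ + cos^{2n}τ)dτ, satisfies the Bernoulli differential equation r'(φ) + p(φ)r(φ) = q(φ)r(φ)^{2nk+1} on any interval where I(φ) + C > 0. -/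

import Mathlib

open Real intervalIntegral

theorem stmt_6 (n k : ℕ) (hn : 1 ≤ n) (hodd : Odd n) (hk : 1 ≤ k)
    (p q I : ℝ → ℝ)
    (hp : ∀ φ : ℝ, p φ = (Real.sin φ ^ (2 * n - 1) * Real.cos φ -
        Real.cos φ ^ (2 * n - 1) * Real.sin φ) /
        (Real.sin φ ^ (2 * n) + Real.cos φ ^ (2 * n)))
    (hq : ∀ φ : ℝ, q φ = -(Real.sin φ ^ (n - 1) * Real.cos φ ^ (n - 1) *
        (Real.sin φ ^ (2 * n) + Real.cos φ ^ (2 * n)) ^ (k - 1)))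
    (hI : ∀ φ : ℝ, I φ = 2 * n * k * ∫ τ in (0:ℝ)..φ,
        Real.sin τ ^ (n - 1) * Real.cos τ ^ (n - 1) /
          (Real.sin τ ^ (2 * n) + Real.cos τ ^ (2 * n)))
    (C : ℝ) (r : ℝ → ℝ)
    (hr : ∀ φ : ℝ, r φ = (Real.sin φ ^ (2 * n) + Real.cos φ ^ (2 * n)) ^
        (-(1 : ℝ) / (2 * n)) * (I φ + C) ^ (-(1 : ℝ) / (2 * n * k)))
    (φ : ℝ) (hpos : 0 < I φ + C) :
    HasDerivAt r (q φ * r φ ^ (2 * n * k + 1) - p φ * r φ) φ := by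
  -- positivity of A x = sin x ^ (2n) + cos x ^ (2n)
  have hA : ∀ x : ℝ, 0 < Real.sin x ^ (2 * n) + Real.cos x ^ (2 * n) := by
    intro x
    rcases eq_or_ne (Real.sin x) 0 with h | h
    · have hc : Real.cos x ≠ 0 := by
        intro hc
        have := Real.sin_sq_add_cos_sq x
        rw [h, hc] at this; norm_num at this
      have h1 : 0 < Real.cos x ^ (2 * n) := by
        rw [mul_comm, pow_mul]
        have : 0 < Real.cos x ^ 2 := by positivity
        positivity
      have h2 : 0 ≤ Real.sin x ^ (2 * n) := by
        rw [mul_comm, pow_mul]; positivity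
      linarith
    · have h1 : 0 < Real.sin x ^ (2 * n) := by
        rw [mul_comm, pow_mul]
        have : 0 < Real.sin x ^ 2 := by positivity
        positivity
      have h2 : 0 ≤ Real.cos x ^ (2 * n) := by
        rw [mul_comm, pow_mul]; positivity
      linarith
  have hcont : Continuous fun τ : ℝ => Real.sin τ ^ (n - 1) * Real.cos τ ^ (n - 1) /
      (Real.sin τ ^ (2 * n) + Real.cos τ ^ (2 * n)) :=
    Continuous.div ((Real.continuous_sin.pow _).mul (Real.continuous_cos.pow _))
      ((Real.continuous_sin.pow _).add (Real.continuous_cos.pow _))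
      (fun x => (hA x).ne')
  have hIfun : I = fun x => 2 * (n:ℝ) * (k:ℝ) * ∫ τ in (0:ℝ)..x,
      Real.sin τ ^ (n - 1) * Real.cos τ ^ (n - 1) /
        (Real.sin τ ^ (2 * n) + Real.cos τ ^ (2 * n)) := funext hI
  have hIdiff : HasDerivAt I (2 * (n:ℝ) * (k:ℝ) *
      (Real.sin φ ^ (n - 1) * Real.cos φ ^ (n - 1) /
        (Real.sin φ ^ (2 * n) + Real.cos φ ^ (2 * n)))) φ := by
    rw [hIfun]
    exact (intervalIntegral.integral_hasDerivAt_right (hcont.intervalIntegrable _ _)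
      hcont.aestronglyMeasurable.stronglyMeasurableAtFilter hcont.continuousAt).const_mul _
  -- abbreviations
  set a := Real.sin φ ^ (2 * n) + Real.cos φ ^ (2 * n) with ha_def
  have haφ : 0 < a := hA φ
  set b := I φ + C with hb_def
  have hbφ : 0 < b := hpos
  have hn0 : ((n:ℝ)) ≠ 0 := Nat.cast_ne_zero.mpr (by omega)
  have hk0 : ((k:ℝ)) ≠ 0 := Nat.cast_ne_zero.mpr (by omega)
  -- derivative of A
  have hAdiff : HasDerivAt (fun x => Real.sin x ^ (2 * n) + Real.cos x ^ (2 * n))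
      ((2 * n : ℕ) * Real.sin φ ^ (2 * n - 1) * Real.cos φ +
        (2 * n : ℕ) * Real.cos φ ^ (2 * n - 1) * (-Real.sin φ)) φ :=
    ((Real.hasDerivAt_sin φ).pow _).add ((Real.hasDerivAt_cos φ).pow _)
  have e1 : ℝ := 0
  -- derivative of r
  have hrfun : r = fun x => (Real.sin x ^ (2 * n) + Real.cos x ^ (2 * n)) ^
      (-(1 : ℝ) / (2 * n)) * (I x + C) ^ (-(1 : ℝ) / (2 * n * k)) := funext hr
  have h1 : HasDerivAt (fun x => (Real.sin x ^ (2 * n) + Real.cos x ^ (2 * n)) ^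
      (-(1 : ℝ) / (2 * n)))
      (((2 * n : ℕ) * Real.sin φ ^ (2 * n - 1) * Real.cos φ +
        (2 * n : ℕ) * Real.cos φ ^ (2 * n - 1) * (-Real.sin φ)) * (-(1 : ℝ) / (2 * n)) *
        a ^ ((-(1 : ℝ) / (2 * n)) - 1)) φ :=
    hAdiff.rpow_const (Or.inl haφ.ne')
  have h2 : HasDerivAt (fun x => (I x + C) ^ (-(1 : ℝ) / (2 * n * k)))
      ((2 * (n:ℝ) * (k:ℝ) * (Real.sin φ ^ (n - 1) * Real.cos φ ^ (n - 1) / a)) *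
        (-(1 : ℝ) / (2 * n * k)) * b ^ ((-(1 : ℝ) / (2 * n * k)) - 1)) φ :=
    ((hIdiff.add_const C).rpow_const (Or.inl hbφ.ne'))
  have hD : HasDerivAt (fun x => (Real.sin x ^ (2 * n) + Real.cos x ^ (2 * n)) ^
      (-(1 : ℝ) / (2 * n)) * (I x + C) ^ (-(1 : ℝ) / (2 * n * k))) _ φ := h1.mul h2
  rw [hrfun]
  convert hD using 1
  -- now the value equality
  simp only [hp, hq]
  obtain ⟨m, rfl⟩ : ∃ m, k = m + 1 := ⟨k - 1, by omega⟩
  have ha1 : a ^ ((-(1 : ℝ) / (2 * n)) - 1) = a ^ (-(1 : ℝ) / (2 * n)) / a := by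
    rw [Real.rpow_sub haφ, Real.rpow_one]
  have hb1 : b ^ ((-(1 : ℝ) / (2 * n * (m+1:ℕ))) - 1) = b ^ (-(1 : ℝ) / (2 * n * (m+1:ℕ))) / b := by
    rw [Real.rpow_sub hbφ, Real.rpow_one]
  have hukey : (a ^ (-(1 : ℝ) / (2 * n))) ^ (2 * n * (m+1) + 1) =
      a ^ (-(1 : ℝ) / (2 * n)) / a ^ (m+1) := by
    rw [← Real.rpow_natCast (a ^ (-(1 : ℝ) / (2 * n))) (2 * n * (m+1) + 1),
      ← Real.rpow_mul haφ.le]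
    have : (-(1 : ℝ) / (2 * n)) * ((2 * n * (m+1) + 1 : ℕ) : ℝ) =
        (-(1 : ℝ) / (2 * n)) + (-(((m:ℝ)+1))) := by
      push_cast; field_simp
      try ring
    rw [this, Real.rpow_add haφ, Real.rpow_neg haφ.le]
    rw [show ((m:ℝ)+1) = (((m+1:ℕ)):ℝ) by push_cast; ring, Real.rpow_natCast]
    ring
  have hvkey : (b ^ (-(1 : ℝ) / (2 * n * (m+1:ℕ)))) ^ (2 * n * (m+1) + 1) =
      b ^ (-(1 : ℝ) / (2 * n * (m+1:ℕ))) / b := by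
    rw [← Real.rpow_natCast (b ^ (-(1 : ℝ) / (2 * n * (m+1:ℕ)))) (2 * n * (m+1) + 1),
      ← Real.rpow_mul hbφ.le]
    have : (-(1 : ℝ) / (2 * n * (m+1:ℕ))) * ((2 * n * (m+1) + 1 : ℕ) : ℝ) =
        (-(1 : ℝ) / (2 * n * (m+1:ℕ))) + (-1) := by
      push_cast; field_simp
      try ring
    rw [this, Real.rpow_add hbφ, Real.rpow_neg_one]
    ring
  rw [← ha_def, ← hb_def, mul_pow, hukey, hvkey, ha1, hb1]
  set u := a ^ (-(1 : ℝ) / (2 * n))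
  set v := b ^ (-(1 : ℝ) / (2 * n * (m+1:ℕ)))
  have hkm : m + 1 - 1 = m := by omega
  rw [hkm, pow_succ]
  have ham : (a : ℝ) ^ m ≠ 0 := pow_ne_zero _ haφ.ne'
  push_cast
  field_simp
  ring
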